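/- Let g ≥ 2 be even. Then the ideal J_g^- of ℂ[α,γ] is generated by the set {ζ_g^-, γ ζ_{g−2}^-, γ² ζ_{g−4}^-, …, γ^{g/2−1} ζ_2^-, γ^{g/2}}, and the residue classes of the monomials α^j γ^i with 0 ≤ i ≤ g/2 − 1 and 0 ≤ j ≤ g − 2i − 1 form a ℂ-vector space basis of the quotient ring ℂ[α,γ]/J_g^-. -/

import Mathlib

open MvPolynomial

/-- ζ_k^- ∈ ℂ[α,γ] (variables: X 0 = α, X 1 = γ):
    ζ_{k+1}^- = α ζ_k^- + 2k(k−1) γ ζ_{k−2}^- for k even, and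
    ζ_{k+1}^- = α ζ_k^- − 16k² ζ_{k−1}^- + 2k(k−1) γ ζ_{k−2}^- for k odd. -/
noncomputable def zm : ℕ → MvPolynomial (Fin 2) ℂ
  | 0 => 1
  | 1 => X 0
  | 2 => X 0 * zm 1 - C 16 * zm 0
  | (n + 3) =>
      if n % 2 = 0 then
        X 0 * zm (n + 2) + C (2 * ((n : ℂ) + 2) * ((n : ℂ) + 1)) * X 1 * zm n
      else
        X 0 * zm (n + 2) - C (16 * ((n : ℂ) + 2) ^ 2) * zm (n + 1)
          + C (2 * ((n : ℂ) + 2) * ((n : ℂ) + 1)) * X 1 * zm n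

/-- ζ_k^- for an integer index k, with ζ_k^- = 0 for k < 0. -/
noncomputable def zmZ (k : ℤ) : MvPolynomial (Fin 2) ℂ :=
  if k < 0 then 0 else zm k.toNat

/-- J_g^- = (ζ_g^-, ζ_{g+1}^-, ζ_{g+2}^-) ⊆ ℂ[α,γ]. -/
noncomputable def Jm (g : ℕ) : Ideal (MvPolynomial (Fin 2) ℂ) :=
  Ideal.span {zm g, zm (g + 1), zm (g + 2)}

lemma zm_zero : zm 0 = 1 := rfl
lemma zm_one : zm 1 = X 0 := rfl
lemma zm_two : zm 2 = X 0 * X 0 - C 16 := by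
  show X 0 * zm 1 - C 16 * zm 0 = _
  rw [zm_one, zm_zero, mul_one]

lemma zm_even_rec (a : ℕ) : zm (2*a+3) =
    X 0 * zm (2*a+2) + C (2 * (((2*a : ℕ) : ℂ) + 2) * (((2*a : ℕ) : ℂ) + 1)) * X 1 * zm (2*a) := by
  rw [zm, if_pos (by omega)]

lemma zm_odd_rec (a : ℕ) : zm (2*a+4) =
    X 0 * zm (2*a+3) - C (16 * (((2*a+1 : ℕ) : ℂ) + 2) ^ 2) * zm (2*a+2)
      + C (2 * (((2*a+1 : ℕ) : ℂ) + 2) * (((2*a+1 : ℕ) : ℂ) + 1)) * X 1 * zm (2*a+1) := by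
  have h : 2*a+4 = (2*a+1)+3 := by omega
  rw [h, zm, if_neg (by omega)]

lemma degX0 : degreeOf (0 : Fin 2) (X 0 : MvPolynomial (Fin 2) ℂ) = 1 := by
  rw [degreeOf_X]; simp

lemma degX1 : degreeOf (0 : Fin 2) (X 1 : MvPolynomial (Fin 2) ℂ) = 0 := by
  rw [degreeOf_X]; simp

lemma degX0pow (n : ℕ) : degreeOf (0 : Fin 2) ((X 0 : MvPolynomial (Fin 2) ℂ) ^ n) ≤ n := by
  calc degreeOf (0 : Fin 2) ((X 0 : MvPolynomial (Fin 2) ℂ) ^ n) ≤ n * degreeOf 0 (X 0 : MvPolynomial (Fin 2) ℂ) :=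
        degreeOf_pow_le _ _ _
    _ = n := by rw [degX0, mul_one]

lemma degC (c : ℂ) : degreeOf (0 : Fin 2) (C c : MvPolynomial (Fin 2) ℂ) = 0 := degreeOf_C _ _

lemma degCX1 (c : ℂ) : degreeOf (0 : Fin 2) (C c * X 1 : MvPolynomial (Fin 2) ℂ) = 0 := by
  refine le_antisymm (le_trans (degreeOf_mul_le _ _ _) ?_) (Nat.zero_le _)
  rw [degC, degX1]

lemma degCmul_le (c : ℂ) (p : MvPolynomial (Fin 2) ℂ) {D : ℕ} (h : degreeOf 0 p ≤ D) :
    degreeOf (0 : Fin 2) (C c * p) ≤ D := by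
  refine le_trans (degreeOf_mul_le _ _ _) ?_
  rw [degC]; simpa using h

lemma degCX1mul_le (c : ℂ) (p : MvPolynomial (Fin 2) ℂ) {D : ℕ} (h : degreeOf 0 p ≤ D) :
    degreeOf (0 : Fin 2) (C c * X 1 * p) ≤ D := by
  refine le_trans (degreeOf_mul_le _ _ _) ?_
  rw [degCX1]; simpa using h

lemma zm_structure : ∀ k, ∃ r, zm k = X 0 ^ k + r ∧ degreeOf 0 r ≤ k - 1 := by
  intro k
  induction k using Nat.strong_induction_on with
  | _ k IH =>
    match k with
    | 0 => exact ⟨0, by simp [zm], by simp⟩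
    | 1 => exact ⟨0, by simp [zm, pow_one], by simp⟩
    | 2 => exact ⟨C (-16), by rw [show zm 2 = X 0 * zm 1 - C 16 * zm 0 from rfl]; simp [zm, sq]; ring,
        by simp [degreeOf_C]⟩
    | (n+3) =>
      obtain ⟨r2, h2, hd2⟩ := IH (n+2) (by omega)
      obtain ⟨r0, h0, hd0⟩ := IH n (by omega)
      obtain ⟨r1, h1, hd1⟩ := IH (n+1) (by omega)
      by_cases h : n % 2 = 0
      · refine ⟨X 0 * r2 + C (2 * ((n : ℂ) + 2) * ((n : ℂ) + 1)) * X 1 * X 0 ^ n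
          + C (2 * ((n : ℂ) + 2) * ((n : ℂ) + 1)) * X 1 * r0, ?_, ?_⟩
        · rw [zm, if_pos h, h2, h0]; ring
        · refine le_trans (degreeOf_add_le _ _ _) ?_
          have b1 : degreeOf (0:Fin 2) (X 0 * r2) ≤ 1 + (n+1) := by
            refine le_trans (degreeOf_mul_le _ _ _) ?_
            exact add_le_add (le_of_eq degX0) hd2
          have b2 : degreeOf (0:Fin 2) (C (2 * ((n : ℂ) + 2) * ((n : ℂ) + 1)) * X 1 * X 0 ^ n) ≤ n :=
            degCX1mul_le _ _ (degX0pow n)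
          have b3 : degreeOf (0:Fin 2) (C (2 * ((n : ℂ) + 2) * ((n : ℂ) + 1)) * X 1 * r0) ≤ n - 1 :=
            degCX1mul_le _ _ hd0
          have := le_trans (degreeOf_add_le (0:Fin 2) (X 0 * r2)
            (C (2 * ((n : ℂ) + 2) * ((n : ℂ) + 1)) * X 1 * X 0 ^ n)) (max_le_max b1 b2)
          simp only [max_le_iff] at this ⊢
          omega
      · refine ⟨X 0 * r2 + C (-(16 * ((n : ℂ) + 2) ^ 2)) * X 0 ^ (n+1)
          + C (-(16 * ((n : ℂ) + 2) ^ 2)) * r1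
          + C (2 * ((n : ℂ) + 2) * ((n : ℂ) + 1)) * X 1 * X 0 ^ n
          + C (2 * ((n : ℂ) + 2) * ((n : ℂ) + 1)) * X 1 * r0, ?_, ?_⟩
        · rw [zm, if_neg h, h2, h0, h1, map_neg]; ring
        · have b1 : degreeOf (0:Fin 2) (X 0 * r2) ≤ n+2 := by
            refine le_trans (degreeOf_mul_le _ _ _) ?_
            calc degreeOf (0:Fin 2) (X 0) + degreeOf 0 r2 ≤ 1 + (n+1) :=
                  add_le_add (le_of_eq degX0) hd2
              _ = n+2 := by omega
          have b2 : degreeOf (0:Fin 2) (C (-(16 * ((n : ℂ) + 2) ^ 2)) * X 0 ^ (n+1)) ≤ n+1 :=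
            degCmul_le _ _ (degX0pow (n+1))
          have b3 : degreeOf (0:Fin 2) (C (-(16 * ((n : ℂ) + 2) ^ 2)) * r1) ≤ n :=
            degCmul_le _ _ (by omega : degreeOf (0:Fin 2) r1 ≤ n)
          have b4 : degreeOf (0:Fin 2) (C (2 * ((n : ℂ) + 2) * ((n : ℂ) + 1)) * X 1 * X 0 ^ n) ≤ n :=
            degCX1mul_le _ _ (degX0pow n)
          have b5 : degreeOf (0:Fin 2) (C (2 * ((n : ℂ) + 2) * ((n : ℂ) + 1)) * X 1 * r0) ≤ n - 1 :=
            degCX1mul_le _ _ hd0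
          refine le_trans (degreeOf_add_le _ _ _) ?_
          refine max_le (le_trans (degreeOf_add_le _ _ _) ?_) (by omega)
          refine max_le (le_trans (degreeOf_add_le _ _ _) ?_) (by omega)
          refine max_le (le_trans (degreeOf_add_le _ _ _) ?_) (by omega)
          exact max_le (by omega) (by omega)

noncomputable def piP : MvPolynomial (Fin 2) ℂ →ₐ[ℂ] Polynomial ℂ :=
  aeval ![Polynomial.X, 0]
noncomputable def psiP : MvPolynomial (Fin 2) ℂ →ₐ[ℂ] MvPolynomial (Fin 2) ℂ :=
  aeval ![X 0, 0]
noncomputable def sigmaP : Polynomial ℂ →ₐ[ℂ] MvPolynomial (Fin 2) ℂ :=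
  Polynomial.aeval (X 0)

lemma piP_X0 : piP (X 0) = Polynomial.X := by simp [piP]
lemma piP_X1 : piP (X 1) = 0 := by simp [piP]
lemma psiP_X0 : psiP (X 0) = X 0 := by simp [psiP]
lemma psiP_X1 : psiP (X 1) = 0 := by simp [psiP]

lemma sigma_comp_pi (q : MvPolynomial (Fin 2) ℂ) : sigmaP (piP q) = psiP q := by
  have : sigmaP.comp piP = psiP := by
    apply algHom_ext
    intro i
    fin_cases i
    · simp [piP_X0, sigmaP, psiP_X0]
    · simp [piP_X1, sigmaP, psiP_X1]
  exact congrFun (congrArg DFunLike.coe this) q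

lemma exists_psi (q : MvPolynomial (Fin 2) ℂ) : ∃ s, q = psiP q + X 1 * s := by
  induction q using MvPolynomial.induction_on with
  | C a => exact ⟨0, by simp [psiP, MvPolynomial.algebraMap_eq]⟩
  | add p q hp hq =>
    obtain ⟨s, hs⟩ := hp; obtain ⟨t, ht⟩ := hq
    refine ⟨s + t, ?_⟩
    calc p + q = (psiP p + X 1 * s) + (psiP q + X 1 * t) := by rw [← hs, ← ht]
      _ = (psiP p + psiP q) + X 1 * (s + t) := by ring
      _ = psiP (p + q) + X 1 * (s + t) := by rw [map_add]
  | mul_X p i hp =>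
    have hi : i = 0 ∨ i = 1 := by fin_cases i; exacts [Or.inl rfl, Or.inr rfl]
    rcases hi with rfl | rfl
    · obtain ⟨s, hs⟩ := hp
      refine ⟨s * X 0, ?_⟩
      rw [map_mul, psiP_X0]
      calc p * X 0 = (psiP p + X 1 * s) * X 0 := by rw [← hs]
        _ = psiP p * X 0 + X 1 * (s * X 0) := by ring
    · exact ⟨p, by rw [map_mul, psiP_X1, mul_zero, zero_add, mul_comm]⟩

lemma piP_degree_le (r : MvPolynomial (Fin 2) ℂ) (D : ℕ) (h : degreeOf 0 r ≤ D) :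
    (piP r).degree ≤ (D : WithBot ℕ) := by
  have : piP r = ∑ d ∈ r.support, piP (monomial d (coeff d r)) := by
    rw [← map_sum, ← r.as_sum]
  rw [this]
  refine le_trans (Polynomial.degree_sum_le _ _) ?_
  refine Finset.sup_le fun d hd => ?_
  have hd0 : d 0 ≤ D := le_trans (monomial_le_degreeOf 0 hd) h
  rw [show piP (monomial d (coeff d r)) = Polynomial.C (coeff d r)
      * (Polynomial.X ^ (d 0) * (0 : Polynomial ℂ) ^ (d 1)) from ?_]
  · by_cases h1 : d 1 = 0
    · rw [h1, pow_zero, mul_one]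
      refine le_trans (Polynomial.degree_mul_le _ _) ?_
      refine le_trans (add_le_add Polynomial.degree_C_le (le_of_eq (Polynomial.degree_X_pow (d 0)))) ?_
      simpa using hd0
    · rw [zero_pow h1, mul_zero, mul_zero, Polynomial.degree_zero]
      exact bot_le
  · rw [piP, aeval_monomial, Finsupp.prod_fintype _ _ (fun i => pow_zero _), Fin.prod_univ_two]
    norm_num [Polynomial.algebraMap_eq]

lemma piP_zm_monic (k : ℕ) (hk : 1 ≤ k) :
    (piP (zm k)).Monic ∧ (piP (zm k)).degree = (k : WithBot ℕ) := by
  obtain ⟨r, hr, hd⟩ := zm_structure k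
  have hlt : (piP r).degree < ((k : ℕ) : WithBot ℕ) :=
    lt_of_le_of_lt (piP_degree_le r (k-1) hd) (by exact_mod_cast Nat.sub_lt (by omega) one_pos)
  have hx : piP (zm k) = Polynomial.X ^ k + piP r := by
    rw [hr, map_add, map_pow, piP_X0]
  constructor
  · rw [hx]; exact Polynomial.monic_X_pow_add (by simpa using hlt)
  · rw [hx, Polynomial.degree_add_eq_left_of_degree_lt (by rwa [Polynomial.degree_X_pow]),
      Polynomial.degree_X_pow]

def genSet (M : ℕ) : Set (MvPolynomial (Fin 2) ℂ) :=
  {p | ∃ i < M, p = (X 1 : MvPolynomial (Fin 2) ℂ) ^ i * zm (2*(M-i))}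
    ∪ {(X 1 : MvPolynomial (Fin 2) ℂ) ^ M}

noncomputable def IM (M : ℕ) : Ideal (MvPolynomial (Fin 2) ℂ) := Ideal.span (genSet M)

lemma cE_ne (a : ℕ) : (2 * (((2*a : ℕ) : ℂ) + 2) * (((2*a : ℕ) : ℂ) + 1)) ≠ 0 := by
  have h1 : ((2*a : ℕ) : ℂ) + 2 ≠ 0 := by exact_mod_cast (by omega : (2*a+2 : ℕ) ≠ 0)
  have h2 : ((2*a : ℕ) : ℂ) + 1 ≠ 0 := by exact_mod_cast (by omega : (2*a+1 : ℕ) ≠ 0)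
  exact mul_ne_zero (mul_ne_zero two_ne_zero h1) h2

lemma cO_ne (a : ℕ) : (2 * (((2*a+1 : ℕ) : ℂ) + 2) * (((2*a+1 : ℕ) : ℂ) + 1)) ≠ 0 := by
  have h1 : ((2*a+1 : ℕ) : ℂ) + 2 ≠ 0 := by exact_mod_cast (by omega : (2*a+3 : ℕ) ≠ 0)
  have h2 : ((2*a+1 : ℕ) : ℂ) + 1 ≠ 0 := by exact_mod_cast (by omega : (2*a+2 : ℕ) ≠ 0)
  exact mul_ne_zero (mul_ne_zero two_ne_zero h1) h2

lemma C_inv_mul {c : ℂ} (hc : c ≠ 0) : (C c⁻¹ : MvPolynomial (Fin 2) ℂ) * C c = 1 := by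
  rw [← C_mul, inv_mul_cancel₀ hc, C_1]

lemma L1 (M i : ℕ) (h : i ≤ M) : (X 1 : MvPolynomial (Fin 2) ℂ) ^ i * zm (2*(M-i)) ∈ IM M := by
  rcases lt_or_eq_of_le h with hlt | rfl
  · exact Ideal.subset_span (Or.inl ⟨i, hlt, rfl⟩)
  · have : 2*(i-i) = 0 := by omega
    rw [this, zm_zero, mul_one]
    exact Ideal.subset_span (Or.inr rfl)

lemma memJ (m : ℕ) : ∀ i, i ≤ m →
    ((X 1 : MvPolynomial (Fin 2) ℂ) ^ i * zm (2*(m-i)) ∈ Jm (2*m)) ∧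
    ((X 1 : MvPolynomial (Fin 2) ℂ) ^ i * zm (2*(m-i)+1) ∈ Jm (2*m)) ∧
    ((X 1 : MvPolynomial (Fin 2) ℂ) ^ i * zm (2*(m-i)+2) ∈ Jm (2*m)) := by
  intro i
  induction i with
  | zero =>
    intro _
    simp only [pow_zero, one_mul, Nat.sub_zero]
    refine ⟨Ideal.subset_span ?_, Ideal.subset_span ?_, Ideal.subset_span ?_⟩ <;> simp [Jm]
  | succ i ih =>
    intro h
    obtain ⟨A, B, Cm⟩ := ih (by omega)
    set b := m - (i+1) with hb
    rw [show 2*(m-i) = 2*b+2 from by omega] at A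
    rw [show 2*(m-i)+1 = 2*b+3 from by omega] at B
    rw [show 2*(m-i)+2 = 2*b+4 from by omega] at Cm
    have hA' : (X 1 : MvPolynomial (Fin 2) ℂ) ^ (i+1) * zm (2*b) ∈ Jm (2*m) := by
      have key : (X 1 : MvPolynomial (Fin 2) ℂ) ^ (i+1) * zm (2*b) =
          C (2 * (((2*b : ℕ) : ℂ) + 2) * (((2*b : ℕ) : ℂ) + 1))⁻¹ *
            (X 1 ^ i * zm (2*b+3) - X 0 * (X 1 ^ i * zm (2*b+2))) := by
        rw [zm_even_rec b]
        rw [show (X 1 : MvPolynomial (Fin 2) ℂ) ^ i *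
            (X 0 * zm (2*b+2) + C (2 * (((2*b : ℕ) : ℂ) + 2) * (((2*b : ℕ) : ℂ) + 1)) * X 1 * zm (2*b))
            - X 0 * (X 1 ^ i * zm (2*b+2))
            = C (2 * (((2*b : ℕ) : ℂ) + 2) * (((2*b : ℕ) : ℂ) + 1)) * (X 1 ^ (i+1) * zm (2*b)) from by
          ring]
        rw [← mul_assoc, C_inv_mul (cE_ne b), one_mul]
      rw [key]
      exact Ideal.mul_mem_left _ _ (Ideal.sub_mem _ B (Ideal.mul_mem_left _ _ A))
    have hB' : (X 1 : MvPolynomial (Fin 2) ℂ) ^ (i+1) * zm (2*b+1) ∈ Jm (2*m) := by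
      have key : (X 1 : MvPolynomial (Fin 2) ℂ) ^ (i+1) * zm (2*b+1) =
          C (2 * (((2*b+1 : ℕ) : ℂ) + 2) * (((2*b+1 : ℕ) : ℂ) + 1))⁻¹ *
            (X 1 ^ i * zm (2*b+4) - X 0 * (X 1 ^ i * zm (2*b+3))
              + C (16 * (((2*b+1 : ℕ) : ℂ) + 2) ^ 2) * (X 1 ^ i * zm (2*b+2))) := by
        rw [zm_odd_rec b]
        rw [show (X 1 : MvPolynomial (Fin 2) ℂ) ^ i *
            (X 0 * zm (2*b+3) - C (16 * (((2*b+1 : ℕ) : ℂ) + 2) ^ 2) * zm (2*b+2)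
              + C (2 * (((2*b+1 : ℕ) : ℂ) + 2) * (((2*b+1 : ℕ) : ℂ) + 1)) * X 1 * zm (2*b+1))
            - X 0 * (X 1 ^ i * zm (2*b+3))
            + C (16 * (((2*b+1 : ℕ) : ℂ) + 2) ^ 2) * (X 1 ^ i * zm (2*b+2))
            = C (2 * (((2*b+1 : ℕ) : ℂ) + 2) * (((2*b+1 : ℕ) : ℂ) + 1)) * (X 1 ^ (i+1) * zm (2*b+1))
          from by ring]
        rw [← mul_assoc, C_inv_mul (cO_ne b), one_mul]
      rw [key]
      refine Ideal.mul_mem_left _ _ (Ideal.add_mem _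
        (Ideal.sub_mem _ Cm (Ideal.mul_mem_left _ _ B)) (Ideal.mul_mem_left _ _ A))
    have hC' : (X 1 : MvPolynomial (Fin 2) ℂ) ^ (i+1) * zm (2*b+2) ∈ Jm (2*m) := by
      rw [show (X 1 : MvPolynomial (Fin 2) ℂ) ^ (i+1) * zm (2*b+2)
          = X 1 * (X 1 ^ i * zm (2*b+2)) from by ring]
      exact Ideal.mul_mem_left _ _ A
    rw [show 2*(m-(i+1)) = 2*b from rfl]
    exact ⟨hA', hB', hC'⟩

lemma I_le_J (M : ℕ) : IM M ≤ Jm (2*M) := by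
  rw [IM, Ideal.span_le]
  rintro p (⟨i, hi, rfl⟩ | rfl)
  · exact (memJ M i hi.le).1
  · have := (memJ M M le_rfl).1
    rw [show 2*(M-M) = 0 from by omega, zm_zero, mul_one] at this
    exact this

lemma one_mem_IM0 : IM 0 = ⊤ := by
  rw [Ideal.eq_top_iff_one, IM]
  exact Ideal.subset_span (Or.inr (pow_zero _).symm)

lemma zm_succ_mem (M : ℕ) (hM : 1 ≤ M) : zm (2*M+1) ∈ IM M := by
  obtain ⟨N, rfl⟩ : ∃ N, M = N + 1 := ⟨M - 1, by omega⟩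
  rw [show 2*(N+1)+1 = 2*N+3 from by omega, zm_even_rec N]
  have h0 : zm (2*N+2) ∈ IM (N+1) := by
    have := L1 (N+1) 0 (by omega)
    rwa [pow_zero, one_mul, show 2*(N+1-0) = 2*N+2 from by omega] at this
  have h1 : (X 1 : MvPolynomial (Fin 2) ℂ) * zm (2*N) ∈ IM (N+1) := by
    have := L1 (N+1) 1 (by omega)
    rwa [pow_one, show 2*(N+1-1) = 2*N from by omega] at this
  refine Ideal.add_mem _ (Ideal.mul_mem_left _ _ h0) ?_
  rw [mul_assoc]
  exact Ideal.mul_mem_left _ _ h1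

lemma X1_zm_odd_mem (M : ℕ) (hM : 1 ≤ M) :
    (X 1 : MvPolynomial (Fin 2) ℂ) * zm (2*M-1) ∈ IM M := by
  obtain ⟨N, rfl⟩ : ∃ N, M = N + 1 := ⟨M - 1, by omega⟩
  cases N with
  | zero =>
    rw [show 2*(0+1)-1 = 1 from by omega, zm_one]
    have hX1 : (X 1 : MvPolynomial (Fin 2) ℂ) ∈ IM 1 := by
      have := L1 1 1 le_rfl
      rwa [pow_one, show 2*(1-1) = 0 from by omega, zm_zero, mul_one] at this
    rw [mul_comm]
    exact Ideal.mul_mem_left _ _ hX1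
  | succ K =>
    rw [show 2*(K+1+1)-1 = 2*K+3 from by omega, zm_even_rec K]
    have h1 : (X 1 : MvPolynomial (Fin 2) ℂ) ^ 1 * zm (2*K+2) ∈ IM (K+2) := by
      have := L1 (K+2) 1 (by omega)
      rwa [show 2*(K+2-1) = 2*K+2 from by omega] at this
    have h2 : (X 1 : MvPolynomial (Fin 2) ℂ) ^ 2 * zm (2*K) ∈ IM (K+2) := by
      have := L1 (K+2) 2 (by omega)
      rwa [show 2*(K+2-2) = 2*K from by omega] at this
    rw [mul_add]
    refine Ideal.add_mem _ ?_ ?_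
    · rw [show (X 1 : MvPolynomial (Fin 2) ℂ) * (X 0 * zm (2*K+2))
          = X 0 * (X 1 ^ 1 * zm (2*K+2)) from by ring]
      exact Ideal.mul_mem_left _ _ h1
    · rw [show (X 1 : MvPolynomial (Fin 2) ℂ) *
          (C (2 * (((2*K : ℕ) : ℂ) + 2) * (((2*K : ℕ) : ℂ) + 1)) * X 1 * zm (2*K))
          = C (2 * (((2*K : ℕ) : ℂ) + 2) * (((2*K : ℕ) : ℂ) + 1)) * (X 1 ^ 2 * zm (2*K)) from by
        ring]
      exact Ideal.mul_mem_left _ _ h2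

lemma J_le_I (M : ℕ) (hM : 1 ≤ M) : Jm (2*M) ≤ IM M := by
  obtain ⟨N, rfl⟩ : ∃ N, M = N + 1 := ⟨M - 1, by omega⟩
  rw [Jm, Ideal.span_le]
  have h0 : zm (2*(N+1)) ∈ IM (N+1) := by
    have := L1 (N+1) 0 (by omega)
    rwa [pow_zero, one_mul, Nat.sub_zero] at this
  have h1 : zm (2*(N+1)+1) ∈ IM (N+1) := zm_succ_mem (N+1) (by omega)
  have h2 : zm (2*(N+1)+2) ∈ IM (N+1) := by
    rw [show 2*(N+1)+2 = 2*N+4 from by omega, zm_odd_rec N]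
    have hodd : (X 1 : MvPolynomial (Fin 2) ℂ) * zm (2*N+1) ∈ IM (N+1) := by
      have := X1_zm_odd_mem (N+1) (by omega)
      rwa [show 2*(N+1)-1 = 2*N+1 from by omega] at this
    refine Ideal.add_mem _ (Ideal.sub_mem _ ?_ ?_) ?_
    · rw [show 2*N+3 = 2*(N+1)+1 from by omega]
      exact Ideal.mul_mem_left _ _ h1
    · rw [show 2*N+2 = 2*(N+1) from by omega]
      exact Ideal.mul_mem_left _ _ h0
    · rw [mul_assoc]
      exact Ideal.mul_mem_left _ _ hodd
  rintro p (rfl | rfl | rfl)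
  · exact h0
  · exact h1
  · exact h2

def stdSet (M : ℕ) : Set (MvPolynomial (Fin 2) ℂ) :=
  (fun p : ℕ × ℕ => (X 0 : MvPolynomial (Fin 2) ℂ) ^ p.2 * (X 1 : MvPolynomial (Fin 2) ℂ) ^ p.1)
    '' {p | p.1 < M ∧ p.2 < 2*M - 2*p.1}
noncomputable def Std (M : ℕ) : Submodule ℂ (MvPolynomial (Fin 2) ℂ) :=
  Submodule.span ℂ (stdSet M)

lemma stdSet_succ (M : ℕ) : stdSet (M+1) =
    ((fun j => (X 0 : MvPolynomial (Fin 2) ℂ) ^ j) '' Set.Iio (2*M+2))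
      ∪ ((fun x => (X 1 : MvPolynomial (Fin 2) ℂ) * x) '' stdSet M) := by
  ext y
  constructor
  · rintro ⟨⟨i, j⟩, ⟨hi, hj⟩, rfl⟩
    simp only [] at hi hj ⊢
    cases i with
    | zero =>
      refine Or.inl ⟨j, ?_, by simp⟩
      simp only [Set.mem_Iio]; omega
    | succ i' =>
      refine Or.inr ⟨X 0 ^ j * X 1 ^ i', ⟨(i', j), ⟨by omega, by omega⟩, rfl⟩, ?_⟩
      ring
  · rintro (⟨j, hj, rfl⟩ | ⟨x, ⟨⟨i, j⟩, ⟨hi, hj⟩, rfl⟩, rfl⟩)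
    · refine ⟨(0, j), ⟨by omega, ?_⟩, by simp⟩
      simp only [Set.mem_Iio] at hj; omega
    · exact ⟨(i+1, j), ⟨by omega, by omega⟩, by ring⟩

lemma genSet_succ (M : ℕ) : genSet (M+1) =
    insert (zm (2*M+2)) ((fun x => (X 1 : MvPolynomial (Fin 2) ℂ) * x) '' genSet M) := by
  ext y
  constructor
  · rintro (⟨i, hi, rfl⟩ | rfl)
    · cases i with
      | zero =>
        left
        rw [pow_zero, one_mul, show 2*(M+1-0) = 2*M+2 from by omega]
      | succ i' =>
        right
        refine ⟨X 1 ^ i' * zm (2*(M-i')), Or.inl ⟨i', by omega, rfl⟩, ?_⟩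
        rw [show 2*(M-i') = 2*(M+1-(i'+1)) from by omega]
        ring
    · exact Or.inr ⟨X 1 ^ M, Or.inr rfl, (pow_succ' _ _).symm⟩
  · rintro (rfl | ⟨x, (⟨i, hi, rfl⟩ | rfl), rfl⟩)
    · exact Or.inl ⟨0, by omega, by rw [pow_zero, one_mul, show 2*(M+1-0) = 2*M+2 from by omega]⟩
    · refine Or.inl ⟨i+1, by omega, ?_⟩
      rw [show 2*(M+1-(i+1)) = 2*(M-i) from by omega]
      ring
    · exact Or.inr (by rw [Set.mem_singleton_iff, pow_succ'])

lemma IM_succ_mem (M : ℕ) {f : MvPolynomial (Fin 2) ℂ} (hf : f ∈ IM (M+1)) :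
    ∃ q h, h ∈ IM M ∧ f = q * zm (2*M+2) + X 1 * h := by
  rw [IM, genSet_succ, Ideal.span_insert] at hf
  obtain ⟨u, hu, v, hv, rfl⟩ := Submodule.mem_sup.mp hf
  obtain ⟨q, hq⟩ := Ideal.mem_span_singleton'.mp hu
  have hv' : v ∈ Submodule.map (LinearMap.mulLeft (MvPolynomial (Fin 2) ℂ) (X 1)) (IM M) := by
    refine Ideal.span_le.mpr ?_ hv
    rintro p ⟨t, ht, rfl⟩
    exact ⟨t, Ideal.subset_span ht, rfl⟩
  obtain ⟨h, hh, rfl⟩ := hv'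
  exact ⟨q, h, hh, by rw [← hq]; rfl⟩

lemma Std_succ_mem (M : ℕ) {f : MvPolynomial (Fin 2) ℂ} (hf : f ∈ Std (M+1)) :
    ∃ f0 f1, f0 ∈ Submodule.span ℂ
        ((fun j => (X 0 : MvPolynomial (Fin 2) ℂ) ^ j) '' Set.Iio (2*M+2)) ∧
      f1 ∈ Std M ∧ f = f0 + X 1 * f1 := by
  rw [Std, stdSet_succ, Submodule.span_union] at hf
  obtain ⟨f0, h0, v, hv, rfl⟩ := Submodule.mem_sup.mp hf
  rw [show ((fun x => (X 1 : MvPolynomial (Fin 2) ℂ) * x) '' stdSet M)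
      = (LinearMap.mulLeft ℂ (X 1 : MvPolynomial (Fin 2) ℂ)) '' stdSet M from rfl,
    ← Submodule.map_span] at hv
  obtain ⟨f1, h1, rfl⟩ := hv
  exact ⟨f0, f1, h0, h1, rfl⟩

lemma mono_eq (d : Fin 2 →₀ ℕ) (c : ℂ) :
    (monomial d c : MvPolynomial (Fin 2) ℂ) = c • ((X 0) ^ (d 0) * (X 1) ^ (d 1)) := by
  have hd : d = Finsupp.single 0 (d 0) + Finsupp.single 1 (d 1) := by
    ext x
    fin_cases x <;> simp [Finsupp.single_apply]
  rw [X_pow_eq_monomial, X_pow_eq_monomial, monomial_mul, one_mul, smul_monomial, ← hd]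
  simp

lemma monomial_mem_sup (M : ℕ) :
    ∀ j i : ℕ, (X 0 : MvPolynomial (Fin 2) ℂ) ^ j * (X 1 : MvPolynomial (Fin 2) ℂ) ^ i
      ∈ Std M ⊔ (IM M).restrictScalars ℂ := by
  intro j
  induction j using Nat.strong_induction_on with
  | _ j IHj =>
    intro i
    by_cases hiM : M ≤ i
    · refine le_sup_right (α := Submodule ℂ (MvPolynomial (Fin 2) ℂ)) ?_
      show (X 0 : MvPolynomial (Fin 2) ℂ) ^ j * X 1 ^ i ∈ IM M
      have hX1M : (X 1 : MvPolynomial (Fin 2) ℂ) ^ M ∈ IM M :=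
        Ideal.subset_span (Or.inr rfl)
      rw [show (X 0 : MvPolynomial (Fin 2) ℂ) ^ j * X 1 ^ i
          = (X 0 ^ j * X 1 ^ (i-M)) * X 1 ^ M from by
        rw [mul_assoc, ← pow_add]; congr 2; omega]
      exact Ideal.mul_mem_left _ _ hX1M
    · push_neg at hiM
      by_cases hj : j < 2*M - 2*i
      · exact le_sup_left (α := Submodule ℂ (MvPolynomial (Fin 2) ℂ))
          (Submodule.subset_span ⟨(i, j), ⟨hiM, hj⟩, rfl⟩)
      · push_neg at hj
        set k := 2*(M-i) with hk
        have hk2 : 2 ≤ k := by omega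
        have hjk : k ≤ j := by omega
        obtain ⟨r, hr, hdr⟩ := zm_structure k
        have key : (X 0 : MvPolynomial (Fin 2) ℂ) ^ j * X 1 ^ i
            = X 0 ^ (j-k) * (X 1 ^ i * zm k)
              - ∑ d ∈ r.support, (coeff d r) • ((X 0:MvPolynomial (Fin 2) ℂ) ^ (j-k+d 0) * X 1 ^ (i+d 1)) := by
          have hsum : (X 0 : MvPolynomial (Fin 2) ℂ) ^ (j-k) * X 1 ^ i * r
              = ∑ d ∈ r.support, (coeff d r) • ((X 0:MvPolynomial (Fin 2) ℂ) ^ (j-k+d 0) * X 1 ^ (i+d 1)) := by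
            conv_lhs => rw [r.as_sum]
            rw [Finset.mul_sum]
            refine Finset.sum_congr rfl fun d _ => ?_
            rw [mono_eq, pow_add, pow_add]
            rw [mul_smul_comm]
            congr 1
            ring
          rw [hr, ← hsum]
          rw [show (X 0 : MvPolynomial (Fin 2) ℂ) ^ (j-k) * (X 1 ^ i * (X 0 ^ k + r))
              = X 0 ^ (j-k) * X 0 ^ k * X 1 ^ i + X 0 ^ (j-k) * X 1 ^ i * r from by ring,
            ← pow_add, show j-k+k = j from by omega]
          ring
        rw [key]
        refine Submodule.sub_mem _ ?_ ?_
        · refine le_sup_right (α := Submodule ℂ (MvPolynomial (Fin 2) ℂ)) ?_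
          show (X 0 : MvPolynomial (Fin 2) ℂ) ^ (j-k) * (X 1 ^ i * zm k) ∈ IM M
          exact Ideal.mul_mem_left _ _ (L1 M i (by omega))
        · refine Submodule.sum_mem _ fun d hd => Submodule.smul_mem _ _ ?_
          have hd0 : d 0 ≤ k - 1 := le_trans (monomial_le_degreeOf 0 hd) hdr
          exact IHj (j-k+d 0) (by omega) (i + d 1)

lemma spanning (M : ℕ) : Std M ⊔ (IM M).restrictScalars ℂ = ⊤ := by
  rw [eq_top_iff]
  intro f _
  rw [f.as_sum]
  refine Submodule.sum_mem _ fun d _ => ?_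
  rw [mono_eq]
  exact Submodule.smul_mem _ _ (monomial_mem_sup M (d 0) (d 1))

lemma Std_zero : Std 0 = ⊥ := by
  rw [Std, stdSet, show {p : ℕ × ℕ | p.1 < 0 ∧ p.2 < 2*0 - 2*p.1} = (∅ : Set (ℕ × ℕ)) from by
    ext p; simp, Set.image_empty, Submodule.span_empty]

lemma psiP_fix {s : Set ℕ} {f0 : MvPolynomial (Fin 2) ℂ}
    (hf0 : f0 ∈ Submodule.span ℂ ((fun j => (X 0 : MvPolynomial (Fin 2) ℂ) ^ j) '' s)) :
    psiP f0 = f0 := by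
  induction hf0 using Submodule.span_induction with
  | mem x hx => obtain ⟨j, _, rfl⟩ := hx; rw [map_pow, psiP_X0]
  | zero => exact map_zero _
  | add x y _ _ ihx ihy => rw [map_add, ihx, ihy]
  | smul c x _ ih => rw [map_smul, ih]

lemma piP_deg_Std (M : ℕ) {f : MvPolynomial (Fin 2) ℂ} (hf : f ∈ Std M) :
    (piP f).degree < ((2*M : ℕ) : WithBot ℕ) := by
  induction hf using Submodule.span_induction with
  | mem x hx =>
    obtain ⟨⟨i, j⟩, ⟨hi, hj⟩, rfl⟩ := hx
    rw [map_mul, map_pow, map_pow, piP_X0, piP_X1]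
    cases i with
    | zero =>
      rw [pow_zero, mul_one]
      rw [Polynomial.degree_X_pow]
      exact_mod_cast by omega
    | succ i' =>
      rw [zero_pow (by omega : i'+1 ≠ 0), mul_zero, Polynomial.degree_zero]
      exact WithBot.bot_lt_coe _
  | zero => rw [map_zero, Polynomial.degree_zero]; exact WithBot.bot_lt_coe _
  | add x y _ _ ihx ihy =>
    rw [map_add]
    exact lt_of_le_of_lt (Polynomial.degree_add_le _ _) (max_lt ihx ihy)
  | smul c x _ ih =>
    rw [map_smul]
    exact lt_of_le_of_lt (Polynomial.degree_smul_le _ _) ih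

lemma indep : ∀ M, Std M ⊓ (IM M).restrictScalars ℂ = ⊥ := by
  intro M
  induction M with
  | zero => rw [Std_zero, bot_inf_eq]
  | succ M IH =>
    rw [eq_bot_iff]
    rintro f hf
    obtain ⟨hfS, hfI⟩ := Submodule.mem_inf.mp hf
    rw [Submodule.mem_bot]
    obtain ⟨q, h, hh, hfq⟩ := IM_succ_mem M hfI
    obtain ⟨f0, f1, hf0, hf1, heq⟩ := Std_succ_mem M hfS
    have hπ : piP f = piP q * piP (zm (2*M+2)) := by
      rw [hfq, map_add, map_mul, map_mul, piP_X1, zero_mul, add_zero]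
    have hdeg : (piP f).degree < ((2*M+2 : ℕ) : WithBot ℕ) := by
      have := piP_deg_Std (M+1) hfS
      rwa [show 2*(M+1) = 2*M+2 from by omega] at this
    have hπq : piP q = 0 := by
      by_contra hne
      obtain ⟨hmon, hdζ⟩ := piP_zm_monic (2*M+2) (by omega)
      rw [hπ, Polynomial.degree_mul, hdζ] at hdeg
      have h0le : (0 : WithBot ℕ) ≤ (piP q).degree :=
        Polynomial.zero_le_degree_iff.mpr hne
      have : ((2*M+2:ℕ) : WithBot ℕ) ≤ (piP q).degree + ((2*M+2:ℕ) : WithBot ℕ) :=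
        le_add_of_nonneg_left h0le
      exact absurd (lt_of_le_of_lt this hdeg) (lt_irrefl _)
    have hψq : psiP q = 0 := by rw [← sigma_comp_pi, hπq, map_zero]
    obtain ⟨s, hs⟩ := exists_psi q
    rw [hψq, zero_add] at hs
    have hfX1 : f = X 1 * (s * zm (2*M+2) + h) := by rw [hfq, hs]; ring
    have hf0z : f0 = 0 := by
      have he2 : f0 = X 1 * (s * zm (2*M+2) + h - f1) := by
        rw [show X 1 * (s * zm (2*M+2) + h - f1)
            = X 1 * (s * zm (2*M+2) + h) - X 1 * f1 from by ring, ← hfX1, heq]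
        ring
      rw [← psiP_fix hf0, he2, map_mul, psiP_X1, zero_mul]
    have hf1eq : f1 = s * zm (2*M+2) + h := by
      apply mul_left_cancel₀ (X_ne_zero (R := ℂ) (1 : Fin 2))
      rw [← hfX1, heq, hf0z, zero_add]
    have hζ : zm (2*M+2) ∈ IM M := by
      cases M with
      | zero => rw [one_mem_IM0]; trivial
      | succ N =>
        refine J_le_I (N+1) (by omega) (Ideal.subset_span ?_)
        right; right
        rw [show 2*(N+1)+2 = 2*(N+1)+2 from rfl]
        rfl
    have hmem : f1 ∈ Std M ⊓ (IM M).restrictScalars ℂ := by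
      refine Submodule.mem_inf.mpr ⟨hf1, ?_⟩
      show f1 ∈ IM M
      rw [hf1eq]
      exact Ideal.add_mem _ (Ideal.mul_mem_left _ _ hζ) hh
    rw [IH, Submodule.mem_bot] at hmem
    rw [heq, hf0z, hmem, mul_zero, add_zero]

/-- For g ≥ 2 even, J_g^- is generated by {ζ_g^-, γ ζ_{g−2}^-, …, γ^{g/2−1} ζ_2^-, γ^{g/2}},
    and the monomials α^j γ^i with 0 ≤ i ≤ g/2−1, 0 ≤ j ≤ g−2i−1 give a basis of
    ℂ[α,γ]/J_g^-. -/
theorem Jm_groebner_basis (g : ℕ) (hg : 2 ≤ g) (heven : Even g) :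
    Jm g = Ideal.span
      ({p | ∃ i : ℕ, i ≤ g / 2 - 1 ∧ p = (X 1 : MvPolynomial (Fin 2) ℂ) ^ i * zm (g - 2 * i)}
        ∪ {(X 1 : MvPolynomial (Fin 2) ℂ) ^ (g / 2)}) ∧
    ∃ b : Module.Basis {p : ℕ × ℕ // p.1 ≤ g / 2 - 1 ∧ p.2 ≤ g - 2 * p.1 - 1} ℂ
        (MvPolynomial (Fin 2) ℂ ⧸ Jm g),
      ∀ p, b p = Ideal.Quotient.mk (Jm g)
        ((X 0 : MvPolynomial (Fin 2) ℂ) ^ (p : ℕ × ℕ).2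
          * (X 1 : MvPolynomial (Fin 2) ℂ) ^ (p : ℕ × ℕ).1) := by
  obtain ⟨t, ht⟩ := heven
  set M := g / 2 with hMdef
  have hM2 : g = 2 * M := by omega
  have hM1 : 1 ≤ M := by omega
  have hJI : Jm g = IM M := by
    rw [hM2]
    exact le_antisymm (J_le_I M hM1) (I_le_J M)
  have hsets :
      ({p | ∃ i : ℕ, i ≤ g / 2 - 1 ∧ p = (X 1 : MvPolynomial (Fin 2) ℂ) ^ i * zm (g - 2 * i)}
        ∪ {(X 1 : MvPolynomial (Fin 2) ℂ) ^ (g / 2)}) = genSet M := by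
    ext p
    constructor
    · rintro (⟨i, hi, rfl⟩ | rfl)
      · exact Or.inl ⟨i, by omega, by rw [show g - 2*i = 2*(M-i) from by omega]⟩
      · exact Or.inr rfl
    · rintro (⟨i, hi, rfl⟩ | rfl)
      · exact Or.inl ⟨i, by omega, by rw [show g - 2*i = 2*(M-i) from by omega]⟩
      · exact Or.inr rfl
  constructor
  · rw [hsets, hJI]; rfl
  · -- basis part
    set ι := {p : ℕ × ℕ // p.1 ≤ g / 2 - 1 ∧ p.2 ≤ g - 2 * p.1 - 1} with hι
    set v : ι → MvPolynomial (Fin 2) ℂ :=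
      fun p => (X 0 : MvPolynomial (Fin 2) ℂ) ^ (p : ℕ × ℕ).2
        * (X 1 : MvPolynomial (Fin 2) ℂ) ^ (p : ℕ × ℕ).1 with hv
    have hcond : ∀ p : ℕ × ℕ, (p.1 ≤ g / 2 - 1 ∧ p.2 ≤ g - 2 * p.1 - 1)
        ↔ (p.1 < M ∧ p.2 < 2*M - 2*p.1) := by
      intro p; omega
    have hrange : Set.range v = stdSet M := by
      ext y
      constructor
      · rintro ⟨⟨⟨i, j⟩, hp⟩, rfl⟩
        exact ⟨(i, j), (hcond (i, j)).mp hp, rfl⟩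
      · rintro ⟨⟨i, j⟩, hp, rfl⟩
        exact ⟨⟨(i, j), (hcond (i, j)).mpr hp⟩, rfl⟩
    -- linear independence in the polynomial ring
    have hvb : v = (basisMonomials (Fin 2) ℂ) ∘
        (fun p : ι => Finsupp.single 0 (p : ℕ × ℕ).2 + Finsupp.single 1 (p : ℕ × ℕ).1) := by
      funext p
      simp only [Function.comp_apply, coe_basisMonomials, hv]
      rw [X_pow_eq_monomial, X_pow_eq_monomial, monomial_mul, mul_one]
    have hinj : Function.Injective
        (fun p : ι => Finsupp.single (0 : Fin 2) (p : ℕ × ℕ).2 + Finsupp.single 1 (p : ℕ × ℕ).1) := by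
      intro p q h
      have h0 := congrFun (congrArg DFunLike.coe h) 0
      have h1 := congrFun (congrArg DFunLike.coe h) 1
      simp only [Finsupp.coe_add, Pi.add_apply, Finsupp.single_apply] at h0 h1
      norm_num at h0 h1
      exact Subtype.ext (Prod.ext h1 h0)
    have hli0 : LinearIndependent ℂ v := by
      rw [hvb]
      exact (basisMonomials (Fin 2) ℂ).linearIndependent.comp _ hinj
    set mkL : MvPolynomial (Fin 2) ℂ →ₗ[ℂ] MvPolynomial (Fin 2) ℂ ⧸ Jm g :=
      (Ideal.Quotient.mkₐ ℂ (Jm g)).toLinearMap with hmkL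
    have hker : LinearMap.ker mkL = (Jm g).restrictScalars ℂ := by
      ext x
      rw [LinearMap.mem_ker]
      show Ideal.Quotient.mkₐ ℂ (Jm g) x = 0 ↔ _
      rw [Ideal.Quotient.mkₐ_eq_mk, Ideal.Quotient.eq_zero_iff_mem]
      rfl
    have hli : LinearIndependent ℂ (mkL ∘ v) := by
      refine hli0.map ?_
      rw [hker, hrange]
      show Disjoint (Std M) ((Jm g).restrictScalars ℂ)
      rw [hJI, disjoint_iff]
      exact indep M
    have hsp : ⊤ ≤ Submodule.span ℂ (Set.range (mkL ∘ v)) := by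
      have hrw : Set.range (mkL ∘ v) = mkL '' stdSet M := by
        rw [Set.range_comp, hrange]
      rw [hrw, ← Submodule.map_span]
      have hmapbot : Submodule.map mkL ((IM M).restrictScalars ℂ) = ⊥ := by
        rw [eq_bot_iff]
        rintro y ⟨x, hx, rfl⟩
        rw [Submodule.mem_bot]
        show Ideal.Quotient.mkₐ ℂ (Jm g) x = 0
        rw [Ideal.Quotient.mkₐ_eq_mk, Ideal.Quotient.eq_zero_iff_mem, hJI]
        exact hx
      have hmaptop : Submodule.map mkL ⊤ = ⊤ := by
        rw [Submodule.map_top, LinearMap.range_eq_top]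
        exact Ideal.Quotient.mkₐ_surjective ℂ _
      calc (⊤ : Submodule ℂ (MvPolynomial (Fin 2) ℂ ⧸ Jm g))
          = Submodule.map mkL ⊤ := hmaptop.symm
        _ = Submodule.map mkL (Std M ⊔ (IM M).restrictScalars ℂ) := by rw [spanning M]
        _ = Submodule.map mkL (Std M) ⊔ Submodule.map mkL ((IM M).restrictScalars ℂ) :=
            Submodule.map_sup _ _ _
        _ = Submodule.map mkL (Std M) := by rw [hmapbot, sup_bot_eq]
        _ ≤ Submodule.map mkL (Submodule.span ℂ (stdSet M)) := le_rfl
    refine ⟨Module.Basis.mk hli hsp, fun p => ?_⟩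
    rw [Module.Basis.mk_apply]
    show mkL (v p) = _
    rw [hv]
    show Ideal.Quotient.mkₐ ℂ (Jm g) _ = _
    rw [Ideal.Quotient.mkₐ_eq_mk]
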